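/- With φ(x) := x − x³/3, one has ∫₀^∞ exp( (2/h)·φ(x) ) dx ~ √(π/2)·√h·exp( 4/(3h) ) as h → 0⁺. -/

import Mathlib

noncomputable section

open MeasureTheory

/-- `φ(x) = x − x³/3`. -/
def φ (x : ℝ) : ℝ := x - x ^ 3 / 3

namespace LaplaceAux

open Real Filter Set

/-- The nonnegative "quadratic-like" function. -/
def g (x : ℝ) : ℝ := (x - 1) ^ 2 * (x + 2) / 3

lemma phi_eq (x : ℝ) : φ x = 2 / 3 - g x := by
  unfold φ g; ring

lemma tendsto_sqrt_atTop : Tendsto Real.sqrt atTop atTop := by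
  apply tendsto_atTop_atTop_of_monotone (fun a b h => Real.sqrt_le_sqrt h)
  intro b
  exact ⟨(max b 0) ^ 2, by rw [Real.sqrt_sq (le_max_right _ _)]; exact le_max_left _ _⟩

/-- substitution `u = √t (x - 1)` -/
lemma substitution {t : ℝ} (ht : 0 < t) :
    Real.sqrt t * ∫ x in Set.Ioi (0:ℝ), Real.exp (-(t * g x))
      = ∫ u : ℝ, Set.indicator (Set.Ioi (-Real.sqrt t))
          (fun u => Real.exp (-(u ^ 2 * (1 + u / (3 * Real.sqrt t))))) u := by
  set s := Real.sqrt t with hs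
  have hs0 : 0 < s := Real.sqrt_pos.mpr ht
  have hst : s ^ 2 = t := Real.sq_sqrt ht.le
  set f : ℝ → ℝ :=
    Set.indicator (Set.Ioi (-s)) (fun u => Real.exp (-(u ^ 2 * (1 + u / (3 * s))))) with hf
  have h1 : ∫ x : ℝ, f (s * x) = |s⁻¹| • ∫ u, f u := Measure.integral_comp_mul_left f s
  have h2 : ∫ x : ℝ, f (s * (x - 1)) = ∫ x : ℝ, f (s * x) :=
    integral_sub_right_eq_self (fun x => f (s * x)) 1
  have h3 : (fun x : ℝ => f (s * (x - 1)))
      = Set.indicator (Set.Ioi (0:ℝ)) (fun x => Real.exp (-(t * g x))) := by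
    funext x
    by_cases hx : x ∈ Set.Ioi (0:ℝ)
    · have hx' : (0:ℝ) < x := hx
      have hmem : s * (x - 1) ∈ Set.Ioi (-s) := by
        simp only [Set.mem_Ioi]; nlinarith
      rw [hf, Set.indicator_of_mem hmem, Set.indicator_of_mem hx]
      congr 1
      have hdiv : s * (x - 1) / (3 * s) = (x - 1) / 3 := by
        rw [mul_comm 3 s, mul_div_mul_left _ _ hs0.ne']
      rw [hdiv, ← hst]
      unfold g; ring
    · have hx' : x ≤ 0 := by simpa using hx
      have hmem : s * (x - 1) ∉ Set.Ioi (-s) := by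
        simp only [Set.mem_Ioi, not_lt]; nlinarith
      rw [hf, Set.indicator_of_notMem hmem, Set.indicator_of_notMem hx]
  calc s * ∫ x in Set.Ioi (0:ℝ), Real.exp (-(t * g x))
      = s * ∫ x : ℝ, Set.indicator (Set.Ioi (0:ℝ)) (fun x => Real.exp (-(t * g x))) x := by
        rw [integral_indicator measurableSet_Ioi]
    _ = s * ∫ x : ℝ, f (s * (x - 1)) := by rw [h3]
    _ = s * ∫ x : ℝ, f (s * x) := by rw [h2]
    _ = s * (|s⁻¹| • ∫ u, f u) := by rw [h1]
    _ = ∫ u, f u := by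
        rw [abs_of_pos (inv_pos.mpr hs0), smul_eq_mul, ← mul_assoc,
          mul_inv_cancel₀ hs0.ne', one_mul]

lemma key : Tendsto (fun t : ℝ => Real.sqrt t * ∫ x in Set.Ioi (0:ℝ), Real.exp (-(t * g x)))
    atTop (nhds (Real.sqrt π)) := by
  set F : ℝ → ℝ → ℝ := fun t u => Set.indicator (Set.Ioi (-Real.sqrt t))
    (fun u => Real.exp (-(u ^ 2 * (1 + u / (3 * Real.sqrt t))))) u with hF
  have hDCT : Tendsto (fun t : ℝ => ∫ u : ℝ, F t u) atTop
      (nhds (∫ u : ℝ, Real.exp (-(1:ℝ) * u ^ 2))) := by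
    apply tendsto_integral_filter_of_dominated_convergence
      (fun u => Real.exp (-(2/3 : ℝ) * u ^ 2))
    · filter_upwards with t
      exact ((Real.continuous_exp.comp (by continuity)).aestronglyMeasurable).indicator
        measurableSet_Ioi
    · filter_upwards [eventually_ge_atTop (1:ℝ)] with t ht1
      filter_upwards with u
      have hs0 : 0 < Real.sqrt t := Real.sqrt_pos.mpr (by linarith)
      by_cases hu : u ∈ Set.Ioi (-Real.sqrt t)
      · rw [hF]; simp only [Set.indicator_of_mem hu]
        rw [Real.norm_eq_abs, abs_of_pos (Real.exp_pos _), Real.exp_le_exp]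
        have h13 : -(1/3 : ℝ) ≤ u / (3 * Real.sqrt t) := by
          rw [Set.mem_Ioi] at hu
          have heq : -Real.sqrt t / (3 * Real.sqrt t) = -(1/3 : ℝ) := by
            rw [neg_div, mul_comm, div_mul_cancel_left₀ hs0.ne']
            norm_num
          rw [← heq]
          gcongr
        nlinarith [sq_nonneg u]
      · rw [hF]; simp only [Set.indicator_of_notMem hu, norm_zero]
        positivity
    · exact integrable_exp_neg_mul_sq (by norm_num)
    · filter_upwards with u
      have h1 : Tendsto (fun t : ℝ => u / (3 * Real.sqrt t)) atTop (nhds 0) := by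
        have : Tendsto (fun t : ℝ => 3 * Real.sqrt t) atTop atTop :=
          (tendsto_sqrt_atTop).const_mul_atTop (by norm_num)
        simpa using (tendsto_const_nhds (x := u)).div_atTop this
      have h2 : Tendsto (fun t : ℝ => Real.exp (-(u ^ 2 * (1 + u / (3 * Real.sqrt t)))))
          atTop (nhds (Real.exp (-(1:ℝ) * u ^ 2))) := by
        have : Tendsto (fun t : ℝ => -(u ^ 2 * (1 + u / (3 * Real.sqrt t)))) atTop
            (nhds (-(u ^ 2 * (1 + 0)))) :=
          (((tendsto_const_nhds).add h1).const_mul (u ^ 2)).neg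
        have := (Real.continuous_exp.tendsto _).comp this
        simpa [mul_comm, Function.comp_def] using this
      apply h2.congr'
      have hev : ∀ᶠ t : ℝ in atTop, -Real.sqrt t < u := by
        have : Tendsto (fun t : ℝ => -Real.sqrt t) atTop atBot :=
          tendsto_neg_atTop_atBot.comp tendsto_sqrt_atTop
        exact this.eventually_lt_atBot u
      filter_upwards [hev] with t htu
      rw [hF]; simp only [Set.indicator_of_mem (Set.mem_Ioi.mpr htu)]
  have hgauss : (∫ u : ℝ, Real.exp (-(1:ℝ) * u ^ 2)) = Real.sqrt π := by
    rw [integral_gaussian]; norm_num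
  rw [hgauss] at hDCT
  apply hDCT.congr'
  filter_upwards [eventually_gt_atTop (0:ℝ)] with t ht
  exact (substitution ht).symm

end LaplaceAux

/-- Laplace asymptotics: `∫₀^∞ exp((2/h) φ(x)) dx ~ √(π/2) √h exp(4/(3h))` as `h → 0⁺`. -/
theorem laplace_integral_asymptotics :
    Filter.Tendsto (fun h : ℝ =>
        (∫ x in Set.Ioi (0:ℝ), Real.exp ((2/h) * φ x)) /
          (Real.sqrt (Real.pi / 2) * Real.sqrt h * Real.exp (4 / (3 * h))))
      (nhdsWithin 0 (Set.Ioi 0)) (nhds 1) := by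
  open Real Filter LaplaceAux in
  have ht : Tendsto (fun h : ℝ => 2 / h) (nhdsWithin 0 (Set.Ioi 0)) atTop := by
    have := tendsto_inv_nhdsGT_zero (𝕜 := ℝ)
    simpa [div_eq_mul_inv] using this.const_mul_atTop (r := (2:ℝ)) (by norm_num)
  have comp := (LaplaceAux.key.comp ht).div_const (Real.sqrt π)
  rw [div_self (Real.sqrt_pos.mpr Real.pi_pos).ne'] at comp
  apply comp.congr'
  filter_upwards [self_mem_nhdsWithin] with h hh
  have hh0 : (0:ℝ) < h := hh
  have hth : (0:ℝ) < 2 / h := by positivity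
  -- rewrite the integrand
  have hexp : ∀ x : ℝ, Real.exp ((2/h) * φ x)
      = Real.exp (4 / (3 * h)) * Real.exp (-((2/h) * LaplaceAux.g x)) := by
    intro x
    rw [← Real.exp_add]
    congr 1
    rw [LaplaceAux.phi_eq]
    field_simp
    ring
  have hint : (∫ x in Set.Ioi (0:ℝ), Real.exp ((2/h) * φ x))
      = Real.exp (4 / (3 * h)) * ∫ x in Set.Ioi (0:ℝ), Real.exp (-((2/h) * LaplaceAux.g x)) := by
    simp_rw [hexp]
    exact integral_const_mul _ _
  set I := ∫ x in Set.Ioi (0:ℝ), Real.exp (-((2/h) * LaplaceAux.g x)) with hI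
  have hsqrt : Real.sqrt (π / 2) * Real.sqrt h * Real.sqrt (2 / h) = Real.sqrt π := by
    rw [← Real.sqrt_mul (by positivity), ← Real.sqrt_mul (by positivity)]
    congr 1
    field_simp
  have he : Real.exp (4 / (3 * h)) ≠ 0 := (Real.exp_pos _).ne'
  have hs2h : (0:ℝ) < Real.sqrt (2 / h) := Real.sqrt_pos.mpr hth
  have hsp2 : (0:ℝ) < Real.sqrt (π / 2) := Real.sqrt_pos.mpr (by positivity)
  have hsh : (0:ℝ) < Real.sqrt h := Real.sqrt_pos.mpr hh0
  show Real.sqrt (2 / h) * I / Real.sqrt π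
      = (∫ x in Set.Ioi (0:ℝ), Real.exp ((2/h) * φ x)) /
          (Real.sqrt (π / 2) * Real.sqrt h * Real.exp (4 / (3 * h)))
  rw [hint, ← hsqrt]
  field_simp

end
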